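/- For every symmetric norm ‖·‖ on ℝⁿ and all f, g ∈ ℝⁿ, the Leibniz inequality ‖fg − E(fg)‖ ≤ ‖g‖_∞ ‖f − E f‖ + ‖f‖_∞ ‖g − E g‖ holds, where fg is the pointwise product and E x is the constant vector (1/n)(∑ᵢ xᵢ)𝟏. -/

import Mathlib

open Finset

/-- The symmetric matrix `Θ_x`: off-diagonal entries `(xᵢ+xⱼ)/(2n)`, diagonal chosen
so that every row sums to zero. -/
noncomputable def Theta (n : ℕ) (x : Fin n → ℝ) : Matrix (Fin n) (Fin n) ℝ :=
  fun i j =>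
    if i = j then -(∑ k ∈ Finset.univ.erase i, (x i + x k) / (2 * n))
    else (x i + x j) / (2 * n)

/-- `I_x = Iₙ + Θ_x`. -/
noncomputable def Imat (n : ℕ) (x : Fin n → ℝ) : Matrix (Fin n) (Fin n) ℝ :=
  1 + Theta n x

/-- `E f`: the constant vector whose entries all equal the mean of `f`. -/
noncomputable def meanVec (n : ℕ) (f : Fin n → ℝ) : Fin n → ℝ :=
  fun _ => (∑ i, f i) / n

/-- The sup norm `‖x‖_∞`. -/
noncomputable def linf (n : ℕ) (x : Fin n → ℝ) : ℝ :=
  sSup (Set.range fun i => |x i|)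

/-- The Ky Fan `k`-norm: the sum of the `k` largest absolute values of the entries,
i.e. the maximum of `∑_{i ∈ S} |xᵢ|` over subsets `S` of cardinality `k`. -/
noncomputable def kyFan (n k : ℕ) (x : Fin n → ℝ) : ℝ :=
  sSup ((fun S : Finset (Fin n) => ∑ i ∈ S, |x i|) '' {S | S.card = k})

/-- The dual Ky Fan `k`-norm: `max(‖x‖_∞, ‖x‖₁ / k)`. -/
noncomputable def kyFanDual (n k : ℕ) (x : Fin n → ℝ) : ℝ :=
  max (linf n x) ((∑ i, |x i|) / k)

/-- A symmetric norm on `ℝⁿ`: a norm invariant under coordinate permutations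
and sign changes. -/
structure IsSymmNorm (n : ℕ) (N : (Fin n → ℝ) → ℝ) : Prop where
  add_le : ∀ x y, N (x + y) ≤ N x + N y
  smul : ∀ (c : ℝ) (x), N (c • x) = |c| * N x
  pos : ∀ x, x ≠ 0 → 0 < N x
  perm : ∀ (σ : Equiv.Perm (Fin n)) (x), N (x ∘ σ) = N x
  sign : ∀ (ε x : Fin n → ℝ), (∀ i, ε i = 1 ∨ ε i = -1) → N (ε * x) = N x



noncomputable def Tvec (n : ℕ) (h x : Fin n → ℝ) : Fin n → ℝ :=
  fun i => (∑ j, (h i + h j) * (x i - x j)) / (2 * n)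

section Aux

variable {n : ℕ} {N : (Fin n → ℝ) → ℝ}

lemma symm_zero (hN : ∀ (c : ℝ) (x), N (c • x) = |c| * N x) : N 0 = 0 := by
  have := hN 0 0
  simpa using this

lemma symm_sum_le (hadd : ∀ x y : Fin n → ℝ, N (x + y) ≤ N x + N y)
    (h0 : N 0 = 0) {α : Type*} (s : Finset α) (y : α → Fin n → ℝ) :
    N (∑ a ∈ s, y a) ≤ ∑ a ∈ s, N (y a) := by
  classical
  induction s using Finset.induction with
  | empty => simp [h0]
  | insert _ _ ha ih =>
    rw [Finset.sum_insert ha, Finset.sum_insert ha]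
    exact le_trans (hadd _ _) (by linarith)

lemma perm_mulVec (σ : Equiv.Perm (Fin n)) (x : Fin n → ℝ) :
    (σ.permMatrix ℝ).mulVec x = x ∘ σ := by
  funext i
  simp [Matrix.mulVec, dotProduct, Equiv.Perm.permMatrix, PEquiv.toMatrix,
    Equiv.toPEquiv]

/-- Doubly stochastic matrices contract symmetric norms. -/
lemma ds_contract (hN : IsSymmNorm n N) {A : Matrix (Fin n) (Fin n) ℝ}
    (hA : A ∈ doublyStochastic ℝ (Fin n)) (x : Fin n → ℝ) :
    N (A.mulVec x) ≤ N x := by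
  obtain ⟨w, hw0, hw1, hwA⟩ := exists_eq_sum_perm_of_mem_doublyStochastic hA
  have hmv : A.mulVec x = ∑ σ : Equiv.Perm (Fin n), w σ • (x ∘ σ) := by
    rw [← hwA]
    rw [show ((∑ σ : Equiv.Perm (Fin n), w σ • σ.permMatrix ℝ).mulVec x)
        = ∑ σ : Equiv.Perm (Fin n), w σ • ((σ.permMatrix ℝ).mulVec x) by
      funext i
      simp only [Matrix.mulVec, dotProduct, Finset.sum_apply, Matrix.sum_apply,
        Matrix.smul_apply, Pi.smul_apply, smul_eq_mul, Finset.sum_mul, Finset.mul_sum]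
      rw [Finset.sum_comm]
      simp [mul_assoc]]
    simp [perm_mulVec]
  rw [hmv]
  calc N (∑ σ : Equiv.Perm (Fin n), w σ • (x ∘ σ))
      ≤ ∑ σ : Equiv.Perm (Fin n), N (w σ • (x ∘ σ)) :=
        symm_sum_le hN.add_le (symm_zero hN.smul) _ _
    _ = ∑ σ : Equiv.Perm (Fin n), w σ * N x := by
        refine Finset.sum_congr rfl fun σ _ => ?_
        rw [hN.smul, hN.perm, abs_of_nonneg (hw0 σ)]
    _ = N x := by rw [← Finset.sum_mul, hw1, one_mul]

end Aux


open scoped Classical in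
noncomputable def Amat (n : ℕ) (ε : Fin n → ℝ) : Matrix (Fin n) (Fin n) ℝ :=
  fun i j => (if i = j then ((Finset.univ.filter fun k => ε k = ε i).card : ℝ) / n else 0)
           + (if ε i = ε j then 0 else (1:ℝ) / n)

open scoped Classical in
lemma card_split {n : ℕ} (ε : Fin n → ℝ) (c : Fin n) :
    ((Finset.univ.filter fun k => ε k = ε c).card : ℝ)
      + ((Finset.univ.filter fun k => ¬ (ε k = ε c)).card : ℝ) = n := by
  have h := Finset.card_filter_add_card_filter_not
    (s := (Finset.univ : Finset (Fin n))) (p := fun k => ε k = ε c)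
  rw [Finset.card_univ, Fintype.card_fin] at h
  exact_mod_cast congrArg (fun m : ℕ => (m:ℝ)) h

open scoped Classical in
lemma sum_ite_ne {n : ℕ} (ε : Fin n → ℝ) (c : Fin n) :
    ∑ j, (if ε c = ε j then (0:ℝ) else (1:ℝ) / n)
      = ((Finset.univ.filter fun k => ¬ (ε k = ε c)).card : ℝ) / n := by
  rw [Finset.sum_ite, Finset.sum_const, Finset.sum_const]
  have : (Finset.univ.filter fun j => ¬ (ε c = ε j))
      = (Finset.univ.filter fun k => ¬ (ε k = ε c)) := by
    apply Finset.filter_congr; intro k _; simp [eq_comm]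
  rw [this]
  simp [div_eq_mul_inv]

open scoped Classical in
lemma Amat_ds {n : ℕ} (hn : 0 < n) (ε : Fin n → ℝ) :
    Amat n ε ∈ doublyStochastic ℝ (Fin n) := by
  rw [mem_doublyStochastic_iff_sum]
  have hn' : (0:ℝ) < n := by exact_mod_cast hn
  refine ⟨fun i j => ?_, fun i => ?_, fun j => ?_⟩
  · unfold Amat
    have : (0:ℝ) ≤ ((Finset.univ.filter fun k => ε k = ε i).card : ℝ) / n := by positivity
    split <;> split <;> simp_all <;> positivity
  · unfold Amat
    rw [Finset.sum_add_distrib, Finset.sum_ite_eq, if_pos (Finset.mem_univ i), sum_ite_ne]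
    rw [← add_div, div_eq_one_iff_eq (ne_of_gt hn')]
    exact card_split ε i
  · unfold Amat
    rw [Finset.sum_add_distrib]
    have h1 : ∑ x, (if x = j then ((Finset.univ.filter fun k => ε k = ε x).card : ℝ) / n else 0)
        = ((Finset.univ.filter fun k => ε k = ε j).card : ℝ) / n := by
      rw [Finset.sum_ite_eq', if_pos (Finset.mem_univ j)]
    have h2 : ∑ x, (if ε x = ε j then (0:ℝ) else (1:ℝ) / n)
        = ∑ x, (if ε j = ε x then (0:ℝ) else (1:ℝ) / n) := by
      apply Finset.sum_congr rfl; intro k _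
      by_cases h : ε k = ε j
      · rw [if_pos h, if_pos h.symm]
      · rw [if_neg h, if_neg (fun hh => h hh.symm)]
    rw [h1, h2, sum_ite_ne]
    rw [← add_div, div_eq_one_iff_eq (ne_of_gt hn')]
    exact card_split ε j

open scoped Classical in
lemma Tvec_eq_sign_mulVec {n : ℕ} (ε x : Fin n → ℝ) (hε : ∀ i, ε i = 1 ∨ ε i = -1)
    (hx : ∑ i, x i = 0) :
    Tvec n ε x = ε * ((Amat n ε).mulVec x) := by
  funext i
  have key : ∀ j, (ε i + ε j) * (x i - x j)
      = (if ε j = ε i then 2 * ε i * (x i - x j) else 0) := by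
    intro j
    by_cases h : ε j = ε i
    · rw [if_pos h, h]; ring
    · rw [if_neg h]
      rcases hε i with hi | hi <;> rcases hε j with hj | hj <;>
        first
          | (exfalso; exact h (hj.trans hi.symm))
          | (rw [hi, hj]; ring)
  have hsum : ∑ j, (ε i + ε j) * (x i - x j)
      = 2 * ε i * ((((Finset.univ.filter fun k => ε k = ε i).card : ℝ)) * x i
          - ∑ j ∈ Finset.univ.filter (fun k => ε k = ε i), x j) := by
    rw [Finset.sum_congr rfl (fun j _ => key j), Finset.sum_ite]
    simp only [Finset.sum_const_zero, add_zero]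
    rw [← Finset.mul_sum, Finset.sum_sub_distrib, Finset.sum_const, nsmul_eq_mul]
  have hcomp : ∑ j ∈ Finset.univ.filter (fun k => ε k = ε i), x j
      = - ∑ j ∈ Finset.univ.filter (fun k => ¬ (ε k = ε i)), x j := by
    have := Finset.sum_filter_add_sum_filter_not Finset.univ (fun k => ε k = ε i) x
    rw [hx] at this
    linarith
  have hmv : (Amat n ε).mulVec x i
      = (((Finset.univ.filter fun k => ε k = ε i).card : ℝ)) / n * x i
        + (∑ j ∈ Finset.univ.filter (fun k => ¬ (ε k = ε i)), x j) / n := by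
    unfold Amat Matrix.mulVec dotProduct
    simp only [add_mul, Finset.sum_add_distrib, ite_mul, zero_mul]
    rw [Finset.sum_ite_eq, if_pos (Finset.mem_univ i)]
    congr 1
    rw [Finset.sum_ite]
    simp only [Finset.sum_const, smul_zero, zero_add]
    have hfe : (Finset.univ.filter fun j => ¬ (ε i = ε j))
        = (Finset.univ.filter fun k => ¬ (ε k = ε i)) := by
      apply Finset.filter_congr; intro k _; simp [eq_comm]
    rw [hfe, Finset.sum_div]
    apply Finset.sum_congr rfl; intro j _; ring
  show (∑ j, (ε i + ε j) * (x i - x j)) / (2 * n) = ε i * ((Amat n ε).mulVec x i)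
  rw [hsum, hcomp, hmv]
  rcases Nat.eq_zero_or_pos n with h0 | h0
  · exact absurd i.isLt (by omega)
  · have hn' : (n:ℝ) ≠ 0 := by positivity
    field_simp
    ring

lemma Tvec_lin {n : ℕ} (a b : ℝ) (h₁ h₂ x : Fin n → ℝ) :
    Tvec n (a • h₁ + b • h₂) x = a • Tvec n h₁ x + b • Tvec n h₂ x := by
  funext i
  simp only [Tvec, Pi.add_apply, Pi.smul_apply, smul_eq_mul]
  have : ∑ j, ((a * h₁ i + b * h₂ i + (a * h₁ j + b * h₂ j)) * (x i - x j))
      = a * ∑ j, ((h₁ i + h₁ j) * (x i - x j)) + b * ∑ j, ((h₂ i + h₂ j) * (x i - x j)) := by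
    rw [Finset.mul_sum, Finset.mul_sum, ← Finset.sum_add_distrib]
    exact Finset.sum_congr rfl (fun j _ => by ring)
  rw [this]
  ring

lemma Tvec_smul {n : ℕ} (a : ℝ) (h x : Fin n → ℝ) :
    Tvec n (a • h) x = a • Tvec n h x := by
  have := Tvec_lin a 0 h 0 x
  simpa using this

lemma Tvec_zero {n : ℕ} (x : Fin n → ℝ) : Tvec n 0 x = 0 := by
  funext i; simp [Tvec]

lemma vertex_bound {n : ℕ} {N : (Fin n → ℝ) → ℝ} (hn : 0 < n) (hN : IsSymmNorm n N)
    (ε x : Fin n → ℝ) (hε : ∀ i, ε i = 1 ∨ ε i = -1) (hx : ∑ i, x i = 0) :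
    N (Tvec n ε x) ≤ N x := by
  rw [Tvec_eq_sign_mulVec ε x hε hx, hN.sign ε _ hε]
  exact ds_contract hN (Amat_ds hn ε) x

lemma cube_bound {n : ℕ} {N : (Fin n → ℝ) → ℝ} (hn : 0 < n) (hN : IsSymmNorm n N)
    (c : ℝ) (hc : 0 ≤ c) (x : Fin n → ℝ) (hx : ∑ i, x i = 0) :
    ∀ (s : Finset (Fin n)) (h : Fin n → ℝ), (∀ i, |h i| ≤ c) →
      (∀ i ∉ s, h i = c ∨ h i = -c) → N (Tvec n h x) ≤ c * N x := by
  have hzero : ∀ h : Fin n → ℝ, (∀ i, |h i| ≤ c) → c = 0 → N (Tvec n h x) ≤ c * N x := by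
    intro h hb h0
    have : h = 0 := by
      funext i
      have := hb i
      rw [h0] at this
      simpa using (abs_nonpos_iff.mp (by linarith [abs_nonneg (h i)] : |h i| ≤ 0))
    rw [this, Tvec_zero, symm_zero hN.smul, h0, zero_mul]
  intro s
  induction s using Finset.induction with
  | empty =>
    intro h hb hv
    rcases eq_or_lt_of_le hc with h0 | h0
    · exact hzero h hb h0.symm
    · set ε : Fin n → ℝ := fun i => h i / c with hεdef
      have hε : ∀ i, ε i = 1 ∨ ε i = -1 := by
        intro i
        rcases hv i (Finset.notMem_empty i) with h1 | h1
        · left; rw [hεdef]; simp only; rw [h1]; field_simp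
        · right; rw [hεdef]; simp only; rw [h1]; field_simp
      have hh : h = c • ε := by
        funext i
        rw [hεdef]; simp only [Pi.smul_apply, smul_eq_mul]
        field_simp
      rw [hh, Tvec_smul, hN.smul, abs_of_nonneg hc]
      exact mul_le_mul_of_nonneg_left (vertex_bound hn hN ε x hε hx) hc
  | insert a s' ha ih =>
    intro h hb hv
    rcases eq_or_lt_of_le hc with h0 | h0
    · exact hzero h hb h0.symm
    · set θ : ℝ := (h a + c) / (2 * c) with hθdef
      have hba := abs_le.mp (hb a)
      have hθ0 : 0 ≤ θ := by
        rw [hθdef]; apply div_nonneg (by linarith [hba.1]) (by linarith)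
      have hθ1 : θ ≤ 1 := by
        rw [hθdef, div_le_one (by linarith)]; linarith [hba.2]
      set h₁ := Function.update h a c with hh₁
      set h₂ := Function.update h a (-c) with hh₂
      have hdecomp : h = θ • h₁ + (1 - θ) • h₂ := by
        funext i
        by_cases hi : i = a
        · subst hi
          simp only [Pi.add_apply, Pi.smul_apply, smul_eq_mul, hh₁, hh₂,
            Function.update_self]
          rw [hθdef]; field_simp; ring
        · simp only [Pi.add_apply, Pi.smul_apply, smul_eq_mul, hh₁, hh₂,
            Function.update_of_ne hi]
          ring
      have hb₁ : ∀ i, |h₁ i| ≤ c := by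
        intro i
        by_cases hi : i = a
        · subst hi; rw [hh₁, Function.update_self, abs_of_nonneg hc]
        · rw [hh₁, Function.update_of_ne hi]; exact hb i
      have hb₂ : ∀ i, |h₂ i| ≤ c := by
        intro i
        by_cases hi : i = a
        · subst hi; rw [hh₂, Function.update_self, abs_neg, abs_of_nonneg hc]
        · rw [hh₂, Function.update_of_ne hi]; exact hb i
      have hv₁ : ∀ i ∉ s', h₁ i = c ∨ h₁ i = -c := by
        intro i his
        by_cases hi : i = a
        · subst hi; left; rw [hh₁, Function.update_self]
        · rw [hh₁, Function.update_of_ne hi]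
          exact hv i (by simp [hi, his])
      have hv₂ : ∀ i ∉ s', h₂ i = c ∨ h₂ i = -c := by
        intro i his
        by_cases hi : i = a
        · subst hi; right; rw [hh₂, Function.update_self]
        · rw [hh₂, Function.update_of_ne hi]
          exact hv i (by simp [hi, his])
      have e1 := ih h₁ hb₁ hv₁
      have e2 := ih h₂ hb₂ hv₂
      calc N (Tvec n h x) = N (θ • Tvec n h₁ x + (1 - θ) • Tvec n h₂ x) := by
            rw [hdecomp, Tvec_lin]
        _ ≤ N (θ • Tvec n h₁ x) + N ((1 - θ) • Tvec n h₂ x) := hN.add_le _ _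
        _ = θ * N (Tvec n h₁ x) + (1 - θ) * N (Tvec n h₂ x) := by
            rw [hN.smul, hN.smul, abs_of_nonneg hθ0, abs_of_nonneg (by linarith)]
        _ ≤ θ * (c * N x) + (1 - θ) * (c * N x) := by
            apply add_le_add
            · exact mul_le_mul_of_nonneg_left e1 hθ0
            · exact mul_le_mul_of_nonneg_left e2 (by linarith)
        _ = c * N x := by ring

lemma abs_le_linf {n : ℕ} (hn : 0 < n) (x : Fin n → ℝ) (i : Fin n) :
    |x i| ≤ linf n x :=
  le_csSup ((Set.finite_range _).bddAbove) ⟨i, rfl⟩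

lemma linf_nonneg {n : ℕ} (hn : 0 < n) (x : Fin n → ℝ) : 0 ≤ linf n x :=
  le_trans (abs_nonneg _) (abs_le_linf hn x ⟨0, hn⟩)

lemma main_bound {n : ℕ} {N : (Fin n → ℝ) → ℝ} (hn : 0 < n) (hN : IsSymmNorm n N)
    (h x : Fin n → ℝ) (hx : ∑ i, x i = 0) :
    N (Tvec n h x) ≤ linf n h * N x := by
  exact cube_bound hn hN (linf n h) (linf_nonneg hn h) x hx Finset.univ h
    (fun i => abs_le_linf hn h i) (fun i hi => absurd (Finset.mem_univ i) hi)

lemma sum_sub_mean {n : ℕ} (hn : 0 < n) (f : Fin n → ℝ) :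
    ∑ i, (f - meanVec n f) i = 0 := by
  have hn' : (n:ℝ) ≠ 0 := by positivity
  simp only [Pi.sub_apply, meanVec, Finset.sum_sub_distrib, Finset.sum_const,
    Finset.card_univ, Fintype.card_fin, nsmul_eq_mul]
  field_simp
  ring

lemma key_identity {n : ℕ} (hn : 0 < n) (f g : Fin n → ℝ) :
    f * g - meanVec n (f * g)
      = Tvec n g (f - meanVec n f) + Tvec n f (g - meanVec n g) := by
  have hn' : (n:ℝ) ≠ 0 := by positivity
  funext i
  simp only [Pi.add_apply, Pi.sub_apply, Pi.mul_apply, meanVec, Tvec]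
  have e1 : ∀ j : Fin n, (g i + g j) * (f i - (∑ k, f k) / n - (f j - (∑ k, f k) / n))
      = (g i + g j) * (f i - f j) := fun j => by ring
  have e2 : ∀ j : Fin n, (f i + f j) * (g i - (∑ k, g k) / n - (g j - (∑ k, g k) / n))
      = (f i + f j) * (g i - g j) := fun j => by ring
  rw [Finset.sum_congr rfl (fun j _ => e1 j), Finset.sum_congr rfl (fun j _ => e2 j),
    ← add_div, ← Finset.sum_add_distrib]
  have e3 : ∑ j, ((g i + g j) * (f i - f j) + (f i + f j) * (g i - g j))
      = ∑ j, (2 * (f i * g i) - 2 * (f j * g j)) :=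
    Finset.sum_congr rfl (fun j _ => by ring)
  rw [e3, Finset.sum_sub_distrib, Finset.sum_const, Finset.card_univ, Fintype.card_fin,
    nsmul_eq_mul, ← Finset.mul_sum]
  have e4 : ∑ j : Fin n, f j * g j = ∑ j : Fin n, (f * g) j :=
    Finset.sum_congr rfl (fun j _ => rfl)
  rw [e4]
  field_simp


/-- Theorem 2.6: the Leibniz inequality for symmetric norms. -/
theorem stmt_7 (n : ℕ) (hn : 0 < n) (N : (Fin n → ℝ) → ℝ) (hN : IsSymmNorm n N)
    (f g : Fin n → ℝ) :
    N (f * g - meanVec n (f * g))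
      ≤ linf n g * N (f - meanVec n f) + linf n f * N (g - meanVec n g) := by
  rw [key_identity hn f g]
  calc N (Tvec n g (f - meanVec n f) + Tvec n f (g - meanVec n g))
      ≤ N (Tvec n g (f - meanVec n f)) + N (Tvec n f (g - meanVec n g)) := hN.add_le _ _
    _ ≤ linf n g * N (f - meanVec n f) + linf n f * N (g - meanVec n g) :=
        add_le_add (main_bound hn hN g _ (sum_sub_mean hn f))
          (main_bound hn hN f _ (sum_sub_mean hn g))
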